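/- Let P, Q be orthogonal projections on a complex Hilbert space 𝔥 with ranges 𝔭, 𝔮 in generic position. Then the set H_λ := {(p, p^⊥) ∈ 𝔭 × 𝔭^⊥ : Q^⊥p = Q^⊥p^⊥} is the graph of a linear injective closed map λ: 𝔭 → 𝔭^⊥ with dense domain and dense image, and gra λ = {(Pq, −P^⊥q) : q ∈ 𝔮}. -/

import Mathlib

open scoped ComplexInnerProductSpace

section Aux

variable {E : Type*} [NormedAddCommGroup E] [InnerProductSpace ℂ E] [CompleteSpace E]

set_option linter.unusedSectionVars false

lemma mem_range_iff_fix' (P : E →L[ℂ] E) (hP : P ∘L P = P) (x : E) :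
    x ∈ LinearMap.range (P : E →ₗ[ℂ] E) ↔ P x = x := by
  constructor
  · rintro ⟨y, rfl⟩
    have := congrArg (fun T => T y) hP
    simpa using this
  · intro h; exact ⟨x, h⟩

lemma orth_range_eq_ker' (P : E →L[ℂ] E) (hP : P ∘L P = P) (hsa : IsSelfAdjoint P) :
    (LinearMap.range (P : E →ₗ[ℂ] E))ᗮ = LinearMap.ker (P : E →ₗ[ℂ] E) := by
  ext x
  constructor
  · intro hx
    have h0 : ⟪P x, x⟫ = 0 := hx (P x) ⟨x, rfl⟩
    have hPP : P (P x) = P x := by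
      have := congrArg (fun T => T x) hP; simpa using this
    have h1 : ⟪P x, P x⟫ = 0 := by
      have hs := hsa.isSymmetric x (P x)
      simp only [ContinuousLinearMap.coe_coe] at hs
      rw [hs, hPP, ← inner_conj_symm, h0, map_zero]
    simpa [LinearMap.mem_ker, inner_self_eq_zero] using h1
  · intro hx u hu
    obtain ⟨y, rfl⟩ := hu
    have hx' : P x = 0 := hx
    have hs := hsa.isSymmetric y x
    simp only [ContinuousLinearMap.coe_coe] at hs
    rw [ContinuousLinearMap.coe_coe, hs, hx', inner_zero_right]

end Aux

/-- Corollary 4.3 (`Lambda`): the set `H_λ = {(p,p⊥) ∈ 𝔭 × 𝔭ᗮ : Q⊥p = Q⊥p⊥}` is the graph of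
a linear injective closed map `λ : 𝔭 → 𝔭ᗮ` with dense domain and dense image, and
`gra λ = {(Pq, −P⊥q) : q ∈ 𝔮}`. -/
theorem graph_lambda
    {E : Type*} [NormedAddCommGroup E] [InnerProductSpace ℂ E] [CompleteSpace E]
    (P : E →L[ℂ] E) (hP_proj : P ∘L P = P) (hP_sa : IsSelfAdjoint P)
    (Q : E →L[ℂ] E) (hQ_proj : Q ∘L Q = Q) (hQ_sa : IsSelfAdjoint Q)
    (hgen1 : LinearMap.range (P : E →ₗ[ℂ] E) ⊓ LinearMap.range (Q : E →ₗ[ℂ] E) = ⊥)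
    (hgen2 : LinearMap.range (P : E →ₗ[ℂ] E) ⊓ (LinearMap.range (Q : E →ₗ[ℂ] E))ᗮ = ⊥)
    (hgen3 : (LinearMap.range (P : E →ₗ[ℂ] E))ᗮ ⊓ LinearMap.range (Q : E →ₗ[ℂ] E) = ⊥)
    (hgen4 : (LinearMap.range (P : E →ₗ[ℂ] E))ᗮ ⊓ (LinearMap.range (Q : E →ₗ[ℂ] E))ᗮ = ⊥)
    (Hlam : Set (E × E))
    (hHlam : Hlam = {z : E × E | z.1 ∈ LinearMap.range (P : E →ₗ[ℂ] E) ∧ z.2 ∈ (LinearMap.range (P : E →ₗ[ℂ] E))ᗮ ∧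
      (1 - Q) z.1 = (1 - Q) z.2}) :
    -- parametrization of the graph by 𝔮
    Hlam = {z : E × E | ∃ q ∈ LinearMap.range (Q : E →ₗ[ℂ] E), z = (P q, -((1 - P) q))} ∧
    -- `Hlam` is the graph of a (single-valued) map
    (∀ z ∈ Hlam, ∀ w ∈ Hlam, z.1 = w.1 → z.2 = w.2) ∧
    -- this map is injective
    (∀ z ∈ Hlam, ∀ w ∈ Hlam, z.2 = w.2 → z.1 = w.1) ∧
    -- the map is closed
    IsClosed Hlam ∧
    -- dense domain in 𝔭
    closure (Prod.fst '' Hlam) = (LinearMap.range (P : E →ₗ[ℂ] E) : Set E) ∧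
    -- dense image in 𝔭ᗮ
    closure (Prod.snd '' Hlam) = ((LinearMap.range (P : E →ₗ[ℂ] E))ᗮ : Set E) := by
  have hPP : ∀ x, P (P x) = P x := fun x => by
    simpa using congrArg (fun T => T x) hP_proj
  have memP : ∀ x, x ∈ LinearMap.range (P : E →ₗ[ℂ] E) ↔ P x = x := mem_range_iff_fix' P hP_proj
  have memQ : ∀ x, x ∈ LinearMap.range (Q : E →ₗ[ℂ] E) ↔ Q x = x := mem_range_iff_fix' Q hQ_proj
  have orthP : (LinearMap.range (P : E →ₗ[ℂ] E))ᗮ = LinearMap.ker (P : E →ₗ[ℂ] E) := orth_range_eq_ker' P hP_proj hP_sa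
  have hsymP : ∀ x y : E, ⟪P x, y⟫ = ⟪x, P y⟫ := by
    intro x y
    have := hP_sa.isSymmetric x y
    simpa using this
  have h1P_sa : IsSelfAdjoint ((1 : E →L[ℂ] E) - P) := (IsSelfAdjoint.one (E →L[ℂ] E)).sub hP_sa
  have hsym1P : ∀ x y : E, ⟪(1 - P) x, y⟫ = ⟪x, (1 - P) y⟫ := by
    intro x y
    have := h1P_sa.isSymmetric x y
    simpa only [ContinuousLinearMap.coe_coe] using this
  have hmemQ' : ∀ x : E, x ∈ LinearMap.range (Q : E →ₗ[ℂ] E) ↔ (1 - Q) x = 0 := by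
    intro x
    rw [memQ]
    constructor
    · intro h; simp [ContinuousLinearMap.sub_apply, h]
    · intro h
      have : x - Q x = 0 := by
        simpa [ContinuousLinearMap.sub_apply] using h
      exact (sub_eq_zero.mp this).symm
  -- Part 1 : parametrization
  have hpar : Hlam = {z : E × E | ∃ q ∈ LinearMap.range (Q : E →ₗ[ℂ] E), z = (P q, -((1 - P) q))} := by
    rw [hHlam]; ext z
    simp only [Set.mem_setOf_eq]
    constructor
    · rintro ⟨hp1, hp2, heq⟩
      refine ⟨z.1 - z.2, ?_, ?_⟩
      · rw [hmemQ', map_sub, heq, sub_self]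
      · have hz1 : P z.1 = z.1 := (memP _).1 hp1
        have hz2 : P z.2 = 0 := by rw [orthP] at hp2; exact hp2
        have e1 : P (z.1 - z.2) = z.1 := by rw [map_sub, hz1, hz2, sub_zero]
        have e2 : ((1 : E →L[ℂ] E) - P) (z.1 - z.2) = -z.2 := by
          rw [ContinuousLinearMap.sub_apply, ContinuousLinearMap.one_apply, e1]
          abel
        rw [e1, e2, neg_neg]
    · rintro ⟨q, hq, rfl⟩
      have hQq : Q q = q := (memQ _).1 hq
      refine ⟨⟨q, rfl⟩, ?_, ?_⟩
      · rw [orthP]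
        show P (-(((1 : E →L[ℂ] E) - P) q)) = 0
        rw [map_neg, ContinuousLinearMap.sub_apply, ContinuousLinearMap.one_apply,
          map_sub, hPP, sub_self, neg_zero]
      · show ((1 : E →L[ℂ] E) - Q) (P q) = ((1 : E →L[ℂ] E) - Q) (-(((1 : E →L[ℂ] E) - P) q))
        simp only [map_neg, ContinuousLinearMap.sub_apply, ContinuousLinearMap.one_apply,
          map_sub, hQq]
        abel
  -- Part 2 : single-valued
  have hsv : ∀ z ∈ Hlam, ∀ w ∈ Hlam, z.1 = w.1 → z.2 = w.2 := by
    intro z hz w hw h1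
    rw [hHlam] at hz hw
    obtain ⟨hz1, hz2, hz3⟩ := hz
    obtain ⟨hw1, hw2, hw3⟩ := hw
    have hd : z.2 - w.2 ∈ (LinearMap.range (P : E →ₗ[ℂ] E))ᗮ ⊓ LinearMap.range (Q : E →ₗ[ℂ] E) := by
      refine Submodule.mem_inf.mpr ⟨sub_mem hz2 hw2, ?_⟩
      rw [hmemQ', map_sub, ← hz3, ← hw3, h1, sub_self]
    rw [hgen3, Submodule.mem_bot] at hd
    exact sub_eq_zero.mp hd
  -- Part 3 : injective
  have hinj : ∀ z ∈ Hlam, ∀ w ∈ Hlam, z.2 = w.2 → z.1 = w.1 := by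
    intro z hz w hw h2
    rw [hHlam] at hz hw
    obtain ⟨hz1, hz2, hz3⟩ := hz
    obtain ⟨hw1, hw2, hw3⟩ := hw
    have hd : z.1 - w.1 ∈ LinearMap.range (P : E →ₗ[ℂ] E) ⊓ LinearMap.range (Q : E →ₗ[ℂ] E) := by
      refine Submodule.mem_inf.mpr ⟨sub_mem hz1 hw1, ?_⟩
      rw [hmemQ', map_sub, hz3, hw3, h2, sub_self]
    rw [hgen1, Submodule.mem_bot] at hd
    exact sub_eq_zero.mp hd
  -- Part 4 : closedness
  have hclP : IsClosed ((LinearMap.range (P : E →ₗ[ℂ] E) : Submodule ℂ E) : Set E) := by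
    have hk : LinearMap.range (P : E →ₗ[ℂ] E) = LinearMap.ker (((1 : E →L[ℂ] E) - P : E →L[ℂ] E) : E →ₗ[ℂ] E) := by
      ext x
      rw [memP, LinearMap.mem_ker, ContinuousLinearMap.coe_coe, ContinuousLinearMap.sub_apply,
        ContinuousLinearMap.one_apply, sub_eq_zero, eq_comm]
    rw [hk]
    exact ContinuousLinearMap.isClosed_ker _
  have hcl : IsClosed Hlam := by
    rw [hHlam]
    have hrw : {z : E × E | z.1 ∈ LinearMap.range (P : E →ₗ[ℂ] E) ∧ z.2 ∈ (LinearMap.range (P : E →ₗ[ℂ] E))ᗮ ∧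
        (1 - Q) z.1 = (1 - Q) z.2}
        = (Prod.fst ⁻¹' ((LinearMap.range (P : E →ₗ[ℂ] E) : Submodule ℂ E) : Set E)) ∩
          ((Prod.snd ⁻¹' (((LinearMap.range (P : E →ₗ[ℂ] E))ᗮ : Submodule ℂ E) : Set E)) ∩
            {z : E × E | ((1 : E →L[ℂ] E) - Q) z.1 = ((1 : E →L[ℂ] E) - Q) z.2}) := rfl
    rw [hrw]
    exact (hclP.preimage continuous_fst).inter
      (((Submodule.isClosed_orthogonal _).preimage continuous_snd).inter
        (isClosed_eq (((1 - Q : E →L[ℂ] E)).continuous.comp continuous_fst)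
          (((1 - Q : E →L[ℂ] E)).continuous.comp continuous_snd)))
  -- Part 5 : dense domain
  have himg1 : Prod.fst '' Hlam
      = ((LinearMap.range (Q : E →ₗ[ℂ] E)).map (P : E →ₗ[ℂ] E) : Set E) := by
    rw [hpar]; ext x
    simp only [Set.mem_image, Set.mem_setOf_eq, SetLike.mem_coe, Submodule.mem_map]
    constructor
    · rintro ⟨z, ⟨q, hq, rfl⟩, rfl⟩
      exact ⟨q, hq, rfl⟩
    · rintro ⟨q, hq, rfl⟩
      exact ⟨(P q, -((1 - P) q)), ⟨q, hq, rfl⟩, rfl⟩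
  have hSorth : ((LinearMap.range (Q : E →ₗ[ℂ] E)).map (P : E →ₗ[ℂ] E))ᗮ = (LinearMap.range (P : E →ₗ[ℂ] E))ᗮ := by
    ext x
    constructor
    · intro hx
      rw [orthP, LinearMap.mem_ker]
      have hPx : P x ∈ (LinearMap.range (Q : E →ₗ[ℂ] E))ᗮ := by
        rw [Submodule.mem_orthogonal]
        intro u hu
        have h0 := (Submodule.mem_orthogonal _ _).1 hx (P u) ⟨u, hu, rfl⟩
        rw [← hsymP]
        exact h0
      have hmem : P x ∈ LinearMap.range (P : E →ₗ[ℂ] E) ⊓ (LinearMap.range (Q : E →ₗ[ℂ] E))ᗮ :=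
        Submodule.mem_inf.mpr ⟨⟨x, rfl⟩, hPx⟩
      rw [hgen2, Submodule.mem_bot] at hmem
      exact hmem
    · intro hx
      rw [Submodule.mem_orthogonal]
      rintro u ⟨q, hq, rfl⟩
      rw [orthP, LinearMap.mem_ker, ContinuousLinearMap.coe_coe] at hx
      show ⟪P q, x⟫ = 0
      rw [hsymP, hx, inner_zero_right]
  haveI : CompleteSpace (LinearMap.range (P : E →ₗ[ℂ] E)) := hclP.completeSpace_coe
  have hdense1 : closure (Prod.fst '' Hlam) = (LinearMap.range (P : E →ₗ[ℂ] E) : Set E) := by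
    rw [himg1, ← Submodule.topologicalClosure_coe,
      ← Submodule.orthogonal_orthogonal_eq_closure, hSorth]
    exact congrArg (fun K : Submodule ℂ E => (K : Set E)) (Submodule.orthogonal_orthogonal _)
  -- Part 6 : dense image
  have himg2 : Prod.snd '' Hlam
      = ((LinearMap.range (Q : E →ₗ[ℂ] E)).map (((1 : E →L[ℂ] E) - P) : E →ₗ[ℂ] E) : Set E) := by
    rw [hpar]; ext x
    simp only [Set.mem_image, Set.mem_setOf_eq, SetLike.mem_coe, Submodule.mem_map]
    constructor
    · rintro ⟨z, ⟨q, hq, rfl⟩, rfl⟩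
      exact ⟨-q, neg_mem hq, by simp; abel⟩
    · rintro ⟨q, hq, rfl⟩
      exact ⟨(P (-q), -((1 - P) (-q))), ⟨-q, neg_mem hq, rfl⟩, by simp; abel⟩
  have hTorth : ((LinearMap.range (Q : E →ₗ[ℂ] E)).map (((1 : E →L[ℂ] E) - P) : E →ₗ[ℂ] E))ᗮ
      = LinearMap.range (P : E →ₗ[ℂ] E) := by
    ext x
    constructor
    · intro hx
      have h1 : ((1 : E →L[ℂ] E) - P) x ∈ (LinearMap.range (Q : E →ₗ[ℂ] E))ᗮ := by
        rw [Submodule.mem_orthogonal]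
        intro u hu
        have h0 := (Submodule.mem_orthogonal _ _).1 hx (((1 : E →L[ℂ] E) - P) u) ⟨u, hu, rfl⟩
        rw [← hsym1P]
        exact h0
      have h2 : ((1 : E →L[ℂ] E) - P) x ∈ (LinearMap.range (P : E →ₗ[ℂ] E))ᗮ := by
        rw [orthP, LinearMap.mem_ker, ContinuousLinearMap.coe_coe, ContinuousLinearMap.sub_apply,
          ContinuousLinearMap.one_apply, map_sub, hPP, sub_self]
      have hmem : ((1 : E →L[ℂ] E) - P) x ∈ (LinearMap.range (P : E →ₗ[ℂ] E))ᗮ ⊓ (LinearMap.range (Q : E →ₗ[ℂ] E))ᗮ :=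
        Submodule.mem_inf.mpr ⟨h2, h1⟩
      rw [hgen4, Submodule.mem_bot] at hmem
      rw [memP]
      have hx0 : x - P x = 0 := by
        simpa [ContinuousLinearMap.sub_apply, ContinuousLinearMap.one_apply] using hmem
      exact (sub_eq_zero.mp hx0).symm
    · intro hx
      rw [Submodule.mem_orthogonal]
      rintro u ⟨q, hq, rfl⟩
      have hPx : P x = x := (memP _).1 hx
      have hx' : ((1 : E →L[ℂ] E) - P) x = 0 := by
        rw [ContinuousLinearMap.sub_apply, ContinuousLinearMap.one_apply, hPx, sub_self]
      show ⟪((1 : E →L[ℂ] E) - P) q, x⟫ = 0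
      rw [hsym1P, hx', inner_zero_right]
  have hdense2 : closure (Prod.snd '' Hlam) = ((LinearMap.range (P : E →ₗ[ℂ] E))ᗮ : Set E) := by
    rw [himg2, ← Submodule.topologicalClosure_coe,
      ← Submodule.orthogonal_orthogonal_eq_closure, hTorth]
  exact ⟨hpar, hsv, hinj, hcl, hdense1, hdense2⟩
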